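/- Fix n ≥ 1 and d ≥ 1, and let X = (x₁,…,xₙ) and X' = (x'₁,…,x'ₙ) be sequences in ℝ^d, each with nonzero centroid size. If d_P(X, X') = 0, where d_P(X, X') := inf over Euclidean transformations R of ℝ^d of (Σ_{i=1}^n ‖R(xᵢ)/S_X − x'ᵢ/S_{X'}‖²)^{1/2} with S_X, S_{X'} the centroid sizes, then X and X' have the same shape: there exist α > 0, an orthogonal transformation U of ℝ^d, and t ∈ ℝ^d such that x'ᵢ = α U xᵢ + t for all i = 1,…,n. -/

import Mathlib

noncomputable section

/-- The centroid of a finite sequence of points in `ℝ^d`. -/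
def centroid (n d : ℕ) (X : Fin n → EuclideanSpace ℝ (Fin d)) :
    EuclideanSpace ℝ (Fin d) :=
  (n : ℝ)⁻¹ • ∑ i, X i

/-- The centroid size `S_X = (n⁻¹ Σᵢ ‖xᵢ − x̄‖²)^{1/2}`. -/
def centroidSize (n d : ℕ) (X : Fin n → EuclideanSpace ℝ (Fin d)) : ℝ :=
  Real.sqrt ((n : ℝ)⁻¹ * ∑ i, ‖X i - centroid n d X‖ ^ 2)

/-- The classical Procrustes distance
`d_P(X,X') = inf_R (Σᵢ ‖R(xᵢ)/S_X − x'ᵢ/S_{X'}‖²)^{1/2}`, the infimum over all Euclidean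
transformations (affine isometries) `R` of `ℝ^d`. -/
def procrustesDist (n d : ℕ) (X X' : Fin n → EuclideanSpace ℝ (Fin d)) : ℝ :=
  ⨅ R : EuclideanSpace ℝ (Fin d) ≃ᵃⁱ[ℝ] EuclideanSpace ℝ (Fin d),
    Real.sqrt (∑ i,
      ‖(centroidSize n d X)⁻¹ • R (X i) - (centroidSize n d X')⁻¹ • X' i‖ ^ 2)

open Filter Topology Metric

set_option maxHeartbeats 1000000 in
/-- If the classical Procrustes distance between two sequences with nonzero
centroid sizes vanishes, then the sequences have the same shape: one is the image of the
other under a similarity transformation `x ↦ α U x + t` with `α > 0`, `U` orthogonal. -/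
theorem procrustesDist_eq_zero_same_shape
    (n d : ℕ) (hn : 1 ≤ n) (hd : 1 ≤ d)
    (X X' : Fin n → EuclideanSpace ℝ (Fin d))
    (hX : centroidSize n d X ≠ 0) (hX' : centroidSize n d X' ≠ 0)
    (hzero : procrustesDist n d X X' = 0) :
    ∃ α : ℝ, 0 < α ∧
      ∃ (U : EuclideanSpace ℝ (Fin d) ≃ₗᵢ[ℝ] EuclideanSpace ℝ (Fin d))
        (t : EuclideanSpace ℝ (Fin d)),
        ∀ i, X' i = α • U (X i) + t := by
  classical
  unfold procrustesDist at hzero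
  have ha0 : 0 < centroidSize n d X := lt_of_le_of_ne (Real.sqrt_nonneg _) (Ne.symm hX)
  have hb0 : 0 < centroidSize n d X' := lt_of_le_of_ne (Real.sqrt_nonneg _) (Ne.symm hX')
  set a := centroidSize n d X with ha
  set b := centroidSize n d X' with hb
  set f : (EuclideanSpace ℝ (Fin d) ≃ᵃⁱ[ℝ] EuclideanSpace ℝ (Fin d)) → ℝ := fun R =>
    Real.sqrt (∑ i, ‖a⁻¹ • R (X i) - b⁻¹ • X' i‖ ^ 2) with hf
  have hinf : (⨅ R, f R) = 0 := hzero
  have hseq : ∀ k : ℕ, ∃ R : EuclideanSpace ℝ (Fin d) ≃ᵃⁱ[ℝ] EuclideanSpace ℝ (Fin d), f R < ((k : ℝ) + 1)⁻¹ := by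
    intro k
    apply exists_lt_of_ciInf_lt
    rw [hinf]
    positivity
  choose R hR using hseq
  -- pointwise convergence of R k (X i) to (a * b⁻¹) • X' i
  have hptw : ∀ i, Tendsto (fun k => R k (X i)) atTop (𝓝 ((a * b⁻¹) • X' i)) := by
    intro i
    have h1 : ∀ k, ‖a⁻¹ • R k (X i) - b⁻¹ • X' i‖ < ((k : ℝ) + 1)⁻¹ := by
      intro k
      refine lt_of_le_of_lt ?_ (hR k)
      have h0 : ‖a⁻¹ • R k (X i) - b⁻¹ • X' i‖ ^ 2 ≤
          ∑ j, ‖a⁻¹ • R k (X j) - b⁻¹ • X' j‖ ^ 2 :=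
        Finset.single_le_sum (f := fun j => ‖a⁻¹ • R k (X j) - b⁻¹ • X' j‖ ^ 2)
          (fun j _ => sq_nonneg _) (Finset.mem_univ i)
      have h0' := Real.sqrt_le_sqrt h0
      rwa [Real.sqrt_sq (norm_nonneg _)] at h0'
    have h2 : Tendsto (fun k => a⁻¹ • R k (X i)) atTop (𝓝 (b⁻¹ • X' i)) := by
      rw [tendsto_iff_norm_sub_tendsto_zero]
      apply squeeze_zero (fun k => norm_nonneg _) (fun k => (h1 k).le)
      simpa using (tendsto_one_div_add_atTop_nhds_zero_nat : Tendsto (fun n : ℕ => 1 / ((n : ℝ) + 1)) atTop (𝓝 0))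
    have h3 := h2.const_smul a
    simpa [smul_smul, mul_inv_cancel₀ ha0.ne'] using h3
  -- linear parts, as continuous linear maps
  set g : ℕ → (EuclideanSpace ℝ (Fin d) →L[ℝ] EuclideanSpace ℝ (Fin d)) := fun k =>
    ((R k).linearIsometryEquiv).toLinearIsometry.toContinuousLinearMap with hg
  have hgapply : ∀ k x, g k x = (R k).linearIsometryEquiv x := fun _ _ => rfl
  have hgmem : ∀ k, g k ∈ Metric.closedBall (0 : EuclideanSpace ℝ (Fin d) →L[ℝ] EuclideanSpace ℝ (Fin d)) 1 := by
    intro k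
    rw [Metric.mem_closedBall, dist_zero_right]
    refine ContinuousLinearMap.opNorm_le_bound _ zero_le_one ?_
    intro x
    rw [hgapply, (R k).linearIsometryEquiv.norm_map, one_mul]
  obtain ⟨T, -, φ, hφ, hT⟩ :=
    tendsto_subseq_of_bounded Metric.isBounded_closedBall hgmem
  -- pointwise convergence of the linear parts along the subsequence
  have hTpt : ∀ x : EuclideanSpace ℝ (Fin d), Tendsto (fun j => g (φ j) x) atTop (𝓝 (T x)) := by
    intro x
    exact ((ContinuousLinearMap.apply ℝ (EuclideanSpace ℝ (Fin d)) x).continuous.tendsto T).comp hT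
  -- T is a linear isometry
  have hTnorm : ∀ x : EuclideanSpace ℝ (Fin d), ‖T x‖ = ‖x‖ := by
    intro x
    have h1 : Tendsto (fun j => ‖g (φ j) x‖) atTop (𝓝 ‖T x‖) :=
      (continuous_norm.tendsto _).comp (hTpt x)
    have h2 : (fun j => ‖g (φ j) x‖) = fun _ => ‖x‖ := by
      funext j
      rw [hgapply, (R (φ j)).linearIsometryEquiv.norm_map]
    rw [h2] at h1
    exact tendsto_nhds_unique h1 tendsto_const_nhds
  set Tli : EuclideanSpace ℝ (Fin d) →ₗᵢ[ℝ] EuclideanSpace ℝ (Fin d) := ⟨(T : EuclideanSpace ℝ (Fin d) →ₗ[ℝ] EuclideanSpace ℝ (Fin d)), hTnorm⟩ with hTli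
  set U : EuclideanSpace ℝ (Fin d) ≃ₗᵢ[ℝ] EuclideanSpace ℝ (Fin d) := Tli.toLinearIsometryEquiv rfl with hU
  have hUapply : ∀ x, U x = T x := fun _ => rfl
  set i0 : Fin n := ⟨0, hn⟩ with hi0
  -- decomposition identity
  have hdecomp : ∀ k i, R k (X i) = g k (X i) - g k (X i0) + R k (X i0) := by
    intro k i
    have h := (R k).map_vsub (X i) (X i0)
    simp only [vsub_eq_sub, map_sub] at h
    rw [hgapply, hgapply, h]
    abel
  -- take limits along φ
  have key : ∀ i, (a * b⁻¹) • X' i = T (X i) - T (X i0) + (a * b⁻¹) • X' i0 := by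
    intro i
    have hL : Tendsto (fun j => R (φ j) (X i)) atTop (𝓝 ((a * b⁻¹) • X' i)) :=
      (hptw i).comp hφ.tendsto_atTop
    have hR1 : Tendsto (fun j => g (φ j) (X i) - g (φ j) (X i0) + R (φ j) (X i0)) atTop
        (𝓝 (T (X i) - T (X i0) + (a * b⁻¹) • X' i0)) :=
      (((hTpt (X i)).sub (hTpt (X i0))).add ((hptw i0).comp hφ.tendsto_atTop))
    have heq : (fun j => R (φ j) (X i)) =
        fun j => g (φ j) (X i) - g (φ j) (X i0) + R (φ j) (X i0) := by
      funext j; exact hdecomp (φ j) i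
    rw [heq] at hL
    exact tendsto_nhds_unique hL hR1
  refine ⟨b * a⁻¹, by positivity, U, X' i0 - (b * a⁻¹) • T (X i0), ?_⟩
  intro i
  have hk := key i
  have hba : (b * a⁻¹) * (a * b⁻¹) = 1 := by
    field_simp
  calc X' i = ((b * a⁻¹) * (a * b⁻¹)) • X' i := by rw [hba, one_smul]
    _ = (b * a⁻¹) • ((a * b⁻¹) • X' i) := by rw [mul_smul]
    _ = (b * a⁻¹) • (T (X i) - T (X i0) + (a * b⁻¹) • X' i0) := by rw [hk]
    _ = (b * a⁻¹) • U (X i) + (X' i0 - (b * a⁻¹) • T (X i0)) := by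
        rw [hUapply, smul_add, smul_sub, smul_smul, hba, one_smul]
        abel
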